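/- Let G be a connected simple graph with maximum degree at most 4 and suppose there is a list assignment L with |L(e)| ≥ 22 for every edge e such that G is not strongly L-edge-colorable but every proper subgraph of G is strongly L-edge-colorable (restricting L to its edges). Then G contains no cycle of length 3. -/

import Mathlib

/-- Two edges are "close" (distance at most 1): some endpoint of one equals,
or is adjacent to, some endpoint of the other. In a strong edge-coloring,
distinct close edges must get distinct colors. -/
def EdgeClose {V : Type*} (G : SimpleGraph V) (e₁ e₂ : Sym2 V) : Prop :=
  ∃ u w, u ∈ e₁ ∧ w ∈ e₂ ∧ (u = w ∨ G.Adj u w)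

/-- `c` is a strong edge-coloring of `G` (viewed as a function on all of `Sym2 V`,
only its values on edges of `G` matter). -/
def IsStrongEdgeColoringOn {V : Type*} (G : SimpleGraph V) (c : Sym2 V → ℕ) : Prop :=
  ∀ e₁ ∈ G.edgeSet, ∀ e₂ ∈ G.edgeSet, e₁ ≠ e₂ → EdgeClose G e₁ e₂ → c e₁ ≠ c e₂

/-- `G` is strongly `L`-edge-colorable. -/
def StronglyLColorable {V : Type*} (G : SimpleGraph V) (L : Sym2 V → Finset ℕ) : Prop :=
  ∃ c : Sym2 V → ℕ, IsStrongEdgeColoringOn G c ∧ ∀ e ∈ G.edgeSet, c e ∈ L e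

/-- `G` is strongly `k`-edge-choosable. -/
def StronglyEdgeChoosable {V : Type*} (G : SimpleGraph V) (k : ℕ) : Prop :=
  ∀ L : Sym2 V → Finset ℕ, (∀ e ∈ G.edgeSet, k ≤ (L e).card) → StronglyLColorable G L

section Aux
open Finset SimpleGraph

variable {V : Type*}

lemma edgeClose_symm {G : SimpleGraph V} {e₁ e₂ : Sym2 V}
    (h : EdgeClose G e₁ e₂) : EdgeClose G e₂ e₁ := by
  obtain ⟨u, w, hu, hw, huw⟩ := h
  exact ⟨w, u, hw, hu, huw.imp Eq.symm (fun h' => G.adj_symm h')⟩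

variable [Fintype V] [DecidableEq V] (G : SimpleGraph V) [DecidableRel G.Adj]

instance instDecEdgeClose : ∀ e₁ e₂ : Sym2 V, Decidable (EdgeClose G e₁ e₂) := fun e₁ e₂ => by
  unfold EdgeClose; infer_instance

def closeEdges (e : Sym2 V) : Finset (Sym2 V) :=
  G.edgeFinset.filter (fun e' => e' ≠ e ∧ EdgeClose G e e')

lemma card_close_le {a b : V} (hab : G.Adj a b) (T : Finset (Sym2 V))
    (hTE : T ⊆ G.edgeFinset)
    (hTS : ∀ e' ∈ T, ∀ z ∈ e', z ∈ G.neighborFinset a ∪ G.neighborFinset b) :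
    (closeEdges G s(a,b)).card + 1 + T.card ≤
      ∑ z ∈ G.neighborFinset a ∪ G.neighborFinset b, G.degree z := by
  set S := G.neighborFinset a ∪ G.neighborFinset b with hSdef
  set U := G.edgeFinset.filter (fun e' => ∃ z ∈ S, z ∈ e') with hUdef
  have hTU : T ⊆ U := by
    intro e' he'
    rw [hUdef, mem_filter]
    refine ⟨hTE he', ?_⟩
    induction e' using Sym2.ind with
    | _ p q => exact ⟨p, hTS _ he' p (by simp), by simp⟩
  have hsub : insert s(a,b) (closeEdges G s(a,b)) ⊆ U := by
    intro e' he'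
    rw [mem_insert] at he'
    rw [hUdef, mem_filter]
    rcases he' with rfl | he'
    · exact ⟨mem_edgeFinset.2 hab, a, by simp [hSdef, hab.symm], by simp⟩
    · rw [closeEdges, mem_filter] at he'
      obtain ⟨hE, hne, u, w, hu, hw, h⟩ := he'
      refine ⟨hE, w, ?_, hw⟩
      have hu' : u = a ∨ u = b := by simpa using hu
      rcases h with rfl | h
      · rcases hu' with rfl | rfl
        · simp [hSdef, hab.symm]
        · simp [hSdef, hab]
      · rcases hu' with rfl | rfl
        · simp only [hSdef, mem_union, mem_neighborFinset]
          exact Or.inl h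
        · simp only [hSdef, mem_union, mem_neighborFinset]
          exact Or.inr h
  -- main counting
  have hdeg : ∀ z, G.degree z = (G.edgeFinset.filter (fun e => z ∈ e)).card := by
    intro z
    rw [← card_incidenceFinset_eq_degree, incidenceFinset_eq_filter]
  have hswap : ∑ z ∈ S, G.degree z = ∑ e ∈ G.edgeFinset, (S.filter (fun z => z ∈ e)).card := by
    simp_rw [hdeg, card_filter]
    exact Finset.sum_comm
  have h1 : ∀ e ∈ U, 1 ≤ (S.filter (fun z => z ∈ e)).card := by
    intro e he
    rw [hUdef, mem_filter] at he
    obtain ⟨z, hz, hze⟩ := he.2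
    exact card_pos.2 ⟨z, mem_filter.2 ⟨hz, hze⟩⟩
  have h2 : ∀ e ∈ T, 2 ≤ (S.filter (fun z => z ∈ e)).card := by
    intro e he
    induction e using Sym2.ind with
    | _ p q =>
      have hpq : p ≠ q := by
        have := G.not_isDiag_of_mem_edgeSet (mem_edgeFinset.1 (hTE he))
        simpa using this
      have hp : p ∈ S.filter (fun z => z ∈ s(p,q)) :=
        mem_filter.2 ⟨hTS _ he p (by simp), by simp⟩
      have hq : q ∈ S.filter (fun z => z ∈ s(p,q)) :=
        mem_filter.2 ⟨hTS _ he q (by simp), by simp⟩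
      exact Finset.one_lt_card.2 ⟨p, hp, q, hq, hpq⟩
  have key : U.card + T.card ≤ ∑ e ∈ U, (S.filter (fun z => z ∈ e)).card := by
    calc U.card + T.card = ∑ e ∈ U, 1 + ∑ e ∈ U, (if e ∈ T then 1 else 0) := by
          rw [Finset.sum_boole, Finset.filter_mem_eq_inter, Finset.inter_eq_right.2 hTU]
          simp
      _ = ∑ e ∈ U, (if e ∈ T then 2 else 1) := by
          rw [← Finset.sum_add_distrib]
          apply Finset.sum_congr rfl
          intro e _
          split <;> rfl
      _ ≤ ∑ e ∈ U, (S.filter (fun z => z ∈ e)).card := by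
          apply Finset.sum_le_sum
          intro e he
          split
          · exact h2 e ‹_›
          · exact h1 e he
  have hUsum : ∑ e ∈ U, (S.filter (fun z => z ∈ e)).card ≤
      ∑ e ∈ G.edgeFinset, (S.filter (fun z => z ∈ e)).card := by
    apply Finset.sum_le_sum_of_subset (filter_subset _ _)
  have hins : (closeEdges G s(a,b)).card + 1 = (insert s(a,b) (closeEdges G s(a,b))).card := by
    rw [card_insert_of_notMem]
    simp [closeEdges]
  have := card_le_card hsub
  omega

omit [Fintype V] [DecidableEq V] in
lemma mem_of_incidence {G : SimpleGraph V} {a z : V} {e : Sym2 V}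
    (he : e ∈ G.incidenceSet a) (hz : z ∈ e) : z = a ∨ G.Adj a z := by
  obtain ⟨hE, ha⟩ := he
  induction e using Sym2.ind with
  | _ p q =>
    have hpq : G.Adj p q := hE
    rw [Sym2.mem_iff] at ha hz
    rcases ha with rfl | rfl
    · rcases hz with rfl | rfl
      · exact Or.inl rfl
      · exact Or.inr hpq
    · rcases hz with rfl | rfl
      · exact Or.inr hpq.symm
      · exact Or.inl rfl

lemma card_close_triangle {a b c : V} (hab : G.Adj a b) (hac : G.Adj a c) (hbc : G.Adj b c)
    (hdeg : ∀ z, G.degree z ≤ 4) : (closeEdges G s(a,b)).card ≤ 20 := by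
  have hkey := card_close_le G hab (G.incidenceFinset a ∪ G.incidenceFinset b) ?_ ?_
  · have hT : (G.incidenceFinset a ∪ G.incidenceFinset b).card + 1 = G.degree a + G.degree b := by
      have h1 := Finset.card_union_add_card_inter (G.incidenceFinset a) (G.incidenceFinset b)
      have hint : G.incidenceFinset a ∩ G.incidenceFinset b = {s(a,b)} := by
        rw [incidenceFinset, incidenceFinset, ← Set.toFinset_inter]
        exact (Set.toFinset_congr (G.incidenceSet_inter_incidenceSet_of_adj hab)).trans
          (Set.toFinset_singleton _)
      rw [hint, card_singleton, card_incidenceFinset_eq_degree,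
        card_incidenceFinset_eq_degree] at h1
      exact h1
    have hS : (G.neighborFinset a ∪ G.neighborFinset b).card + 1 ≤ G.degree a + G.degree b := by
      have h1 := Finset.card_union_add_card_inter (G.neighborFinset a) (G.neighborFinset b)
      have h2 : 1 ≤ (G.neighborFinset a ∩ G.neighborFinset b).card :=
        card_pos.2 ⟨c, mem_inter.2 ⟨by simpa using hac, by simpa using hbc⟩⟩
      rw [card_neighborFinset_eq_degree, card_neighborFinset_eq_degree] at h1
      omega
    have hsum : ∑ z ∈ G.neighborFinset a ∪ G.neighborFinset b, G.degree z ≤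
        4 * (G.neighborFinset a ∪ G.neighborFinset b).card := by
      calc ∑ z ∈ G.neighborFinset a ∪ G.neighborFinset b, G.degree z
          ≤ ∑ _z ∈ G.neighborFinset a ∪ G.neighborFinset b, 4 :=
            Finset.sum_le_sum (fun z _ => hdeg z)
        _ = 4 * (G.neighborFinset a ∪ G.neighborFinset b).card := by
            rw [Finset.sum_const, smul_eq_mul, mul_comm]
    have hda := hdeg a
    have hdb := hdeg b
    omega
  · intro e' he'
    rcases mem_union.1 he' with h | h
    · exact mem_edgeFinset.2 ((mem_incidenceFinset _ _ _).1 h).1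
    · exact mem_edgeFinset.2 ((mem_incidenceFinset _ _ _).1 h).1
  · intro e' he' z hz
    rw [mem_union, mem_neighborFinset, mem_neighborFinset]
    rcases mem_union.1 he' with h | h
    · rcases mem_of_incidence ((mem_incidenceFinset _ _ _).1 h) hz with rfl | h'
      · exact Or.inr hab.symm
      · exact Or.inl h'
    · rcases mem_of_incidence ((mem_incidenceFinset _ _ _).1 h) hz with rfl | h'
      · exact Or.inl hab
      · exact Or.inr h'

lemma card_close_outer {a x b c : V} (hax : G.Adj a x) (hab : G.Adj a b) (hac : G.Adj a c)
    (hbc : G.Adj b c) (hxb : x ≠ b) (hxc : x ≠ c)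
    (hdeg : ∀ z, G.degree z ≤ 4) : (closeEdges G s(a,x)).card ≤ 23 := by
  have hbcmem : s(b,c) ∉ G.incidenceFinset a ∪ G.incidenceFinset x := by
    rw [mem_union]
    rintro (h | h)
    · rcases Sym2.mem_iff.1 ((mem_incidenceFinset _ _ _).1 h).2 with h' | h'
      · exact hab.ne h'
      · exact hac.ne h'
    · rcases Sym2.mem_iff.1 ((mem_incidenceFinset _ _ _).1 h).2 with h' | h'
      · exact hxb h'
      · exact hxc h'
  have hkey := card_close_le G hax
    (insert s(b,c) (G.incidenceFinset a ∪ G.incidenceFinset x)) ?_ ?_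
  · have hT : (insert s(b,c) (G.incidenceFinset a ∪ G.incidenceFinset x)).card
        = G.degree a + G.degree x := by
      rw [card_insert_of_notMem hbcmem]
      have h1 := Finset.card_union_add_card_inter (G.incidenceFinset a) (G.incidenceFinset x)
      have hint : G.incidenceFinset a ∩ G.incidenceFinset x = {s(a,x)} := by
        rw [incidenceFinset, incidenceFinset, ← Set.toFinset_inter]
        exact (Set.toFinset_congr (G.incidenceSet_inter_incidenceSet_of_adj hax)).trans
          (Set.toFinset_singleton _)
      rw [hint, card_singleton, card_incidenceFinset_eq_degree,
        card_incidenceFinset_eq_degree] at h1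
      omega
    have hS : (G.neighborFinset a ∪ G.neighborFinset x).card ≤ G.degree a + G.degree x := by
      have := Finset.card_union_le (G.neighborFinset a) (G.neighborFinset x)
      rwa [card_neighborFinset_eq_degree, card_neighborFinset_eq_degree] at this
    have hsum : ∑ z ∈ G.neighborFinset a ∪ G.neighborFinset x, G.degree z ≤
        4 * (G.neighborFinset a ∪ G.neighborFinset x).card := by
      calc ∑ z ∈ G.neighborFinset a ∪ G.neighborFinset x, G.degree z
          ≤ ∑ _z ∈ G.neighborFinset a ∪ G.neighborFinset x, 4 :=
            Finset.sum_le_sum (fun z _ => hdeg z)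
        _ = 4 * (G.neighborFinset a ∪ G.neighborFinset x).card := by
            rw [Finset.sum_const, smul_eq_mul, mul_comm]
    have hda := hdeg a
    have hdx := hdeg x
    omega
  · intro e' he'
    rcases mem_insert.1 he' with rfl | h
    · exact mem_edgeFinset.2 hbc
    · rcases mem_union.1 h with h' | h'
      · exact mem_edgeFinset.2 ((mem_incidenceFinset _ _ _).1 h').1
      · exact mem_edgeFinset.2 ((mem_incidenceFinset _ _ _).1 h').1
  · intro e' he' z hz
    rw [mem_union, mem_neighborFinset, mem_neighborFinset]
    rcases mem_insert.1 he' with rfl | h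
    · rcases Sym2.mem_iff.1 hz with rfl | rfl
      · exact Or.inl hab
      · exact Or.inl hac
    · rcases mem_union.1 h with h' | h'
      · rcases mem_of_incidence ((mem_incidenceFinset _ _ _).1 h') hz with rfl | h''
        · exact Or.inr hax.symm
        · exact Or.inl h''
      · rcases mem_of_incidence ((mem_incidenceFinset _ _ _).1 h') hz with rfl | h''
        · exact Or.inl hax
        · exact Or.inr h''

lemma greedy (L : Sym2 V → Finset ℕ)
    (hL : ∀ e ∈ G.edgeSet, 22 ≤ (L e).card) (ρ : Sym2 V → ℕ) (n : ℕ) :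
    ∀ (R : Finset (Sym2 V)), R.card = n → (∀ e ∈ R, e ∈ G.edgeSet) →
    (∀ e ∈ R, ((closeEdges G e).filter (fun e' => ¬(e' ∈ R ∧ ρ e < ρ e'))).card ≤ 21) →
    ∀ φ : Sym2 V → ℕ,
    (∀ e ∈ G.edgeSet, e ∉ R → φ e ∈ L e) →
    (∀ e₁ ∈ G.edgeSet, ∀ e₂ ∈ G.edgeSet, e₁ ∉ R → e₂ ∉ R → e₁ ≠ e₂ → EdgeClose G e₁ e₂ →
      φ e₁ ≠ φ e₂) →
    StronglyLColorable G L := by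
  induction n with
  | zero =>
    intro R hcard _ _ φ hφL hφS
    rw [Finset.card_eq_zero] at hcard
    subst hcard
    exact ⟨φ, fun e₁ h₁ e₂ h₂ hne hcl =>
      hφS e₁ h₁ e₂ h₂ (notMem_empty _) (notMem_empty _) hne hcl,
      fun e he => hφL e he (notMem_empty _)⟩
  | succ n ih =>
    intro R hcard hRE hcond φ hφL hφS
    have hne : R.Nonempty := card_pos.1 (by omega)
    obtain ⟨e₀, he₀R, he₀min⟩ := R.exists_min_image ρ hne
    set F := ((closeEdges G e₀).filter (fun e' => e' ∉ R)).image φ with hF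
    have hFcard : F.card ≤ 21 := by
      refine le_trans Finset.card_image_le (le_trans (card_le_card ?_) (hcond e₀ he₀R))
      intro e' h
      rw [mem_filter] at h ⊢
      exact ⟨h.1, fun hc => h.2 hc.1⟩
    have hex : (L e₀ \ F).Nonempty := by
      apply card_pos.1
      have h1 := hL e₀ (hRE e₀ he₀R)
      have h2 := Finset.le_card_sdiff F (L e₀)
      omega
    obtain ⟨k, hk⟩ := hex
    rw [mem_sdiff] at hk
    refine ih (R.erase e₀) (by rw [card_erase_of_mem he₀R, hcard]; rfl)
      (fun e he => hRE e (erase_subset _ _ he)) ?_ (Function.update φ e₀ k) ?_ ?_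
    · intro e he
      have heR := erase_subset _ _ he
      have hfeq : ((closeEdges G e).filter (fun e' => ¬(e' ∈ R.erase e₀ ∧ ρ e < ρ e')))
          = ((closeEdges G e).filter (fun e' => ¬(e' ∈ R ∧ ρ e < ρ e'))) := by
        apply filter_congr
        intro e' _
        simp only [eq_iff_iff, not_iff_not]
        constructor
        · rintro ⟨h1, h2⟩; exact ⟨erase_subset _ _ h1, h2⟩
        · rintro ⟨h1, h2⟩
          refine ⟨mem_erase.2 ⟨?_, h1⟩, h2⟩
          rintro rfl
          exact absurd (he₀min e heR) (by omega)
      rw [hfeq]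
      exact hcond e heR
    · intro e heE heR'
      by_cases hee : e = e₀
      · subst hee
        rw [Function.update_self]
        exact hk.1
      · rw [Function.update_of_ne hee]
        refine hφL e heE ?_
        intro heR
        exact heR' (mem_erase.2 ⟨hee, heR⟩)
    · intro e₁ h₁ e₂ h₂ hR₁ hR₂ hne' hcl
      by_cases he₁ : e₁ = e₀
      · have he₂ : e₂ ≠ e₀ := fun h => hne' (by rw [he₁, h])
        have hR₂' : e₂ ∉ R := fun h => hR₂ (mem_erase.2 ⟨he₂, h⟩)
        rw [he₁, Function.update_self, Function.update_of_ne he₂]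
        have hmem : φ e₂ ∈ F := by
          rw [hF]
          exact mem_image_of_mem φ (mem_filter.2 ⟨mem_filter.2
            ⟨mem_edgeFinset.2 h₂, he₂, he₁ ▸ hcl⟩, hR₂'⟩)
        intro hcontra
        exact hk.2 (hcontra ▸ hmem)
      · rw [Function.update_of_ne he₁]
        by_cases he₂ : e₂ = e₀
        · have hR₁' : e₁ ∉ R := fun h => hR₁ (mem_erase.2 ⟨he₁, h⟩)
          rw [he₂, Function.update_self]
          have hmem : φ e₁ ∈ F := by
            rw [hF]
            exact mem_image_of_mem φ (mem_filter.2 ⟨mem_filter.2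
              ⟨mem_edgeFinset.2 h₁, he₁, edgeClose_symm (he₂ ▸ hcl)⟩, hR₁'⟩)
          intro hcontra
          exact hk.2 (hcontra.symm ▸ hmem)
        · rw [Function.update_of_ne he₂]
          exact hφS e₁ h₁ e₂ h₂ (fun h => hR₁ (mem_erase.2 ⟨he₁, h⟩))
            (fun h => hR₂ (mem_erase.2 ⟨he₂, h⟩)) hne' hcl

lemma exists_other_endpoint {a : V} {e : Sym2 V} (he : e ∈ G.incidenceFinset a) :
    ∃ x, G.Adj a x ∧ e = s(a,x) := by
  obtain ⟨hE, ha⟩ := (mem_incidenceFinset _ _ _).1 he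
  induction e using Sym2.ind with
  | _ p q =>
    have hpq : G.Adj p q := hE
    rcases Sym2.mem_iff.1 ha with rfl | rfl
    · exact ⟨q, hpq, rfl⟩
    · exact ⟨p, hpq.symm, Sym2.eq_swap⟩

lemma cond_helper (hdeg : ∀ z, G.degree z ≤ 4) {a b c : V}
    (hab : G.Adj a b) (hac : G.Adj a c) (hbc : G.Adj b c)
    (ρ : Sym2 V → ℕ) (hρab : ρ s(a,b) = 2) (hρac : ρ s(a,c) = 1)
    (R : Finset (Sym2 V)) (hRab : s(a,b) ∈ R) (hRac : s(a,c) ∈ R)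
    {e : Sym2 V} (he : e ∈ G.incidenceFinset a)
    (hρ0 : ∀ x, G.Adj a x → x ≠ b → x ≠ c → ρ s(a,x) = 0) :
    ((closeEdges G e).filter (fun e' => ¬(e' ∈ R ∧ ρ e < ρ e'))).card ≤ 21 := by
  obtain ⟨x, hax, rfl⟩ := exists_other_endpoint G he
  by_cases hxb : x = b
  · subst hxb
    exact le_trans (card_le_card (filter_subset _ _))
      (le_trans (card_close_triangle G hax hac hbc hdeg) (by norm_num))
  by_cases hxc : x = c
  · subst hxc
    exact le_trans (card_le_card (filter_subset _ _))
      (le_trans (card_close_triangle G hax hab hbc.symm hdeg) (by norm_num))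
  -- outer case
  have hρe : ρ s(a,x) = 0 := hρ0 x hax hxb hxc
  have hCE : (closeEdges G s(a,x)).card ≤ 23 := card_close_outer G hax hab hac hbc hxb hxc hdeg
  have habCE : s(a,b) ∈ closeEdges G s(a,x) := by
    rw [closeEdges, mem_filter]
    refine ⟨mem_edgeFinset.2 hab, fun h => ?_, a, a, by simp, by simp, Or.inl rfl⟩
    rw [Sym2.eq_iff] at h
    rcases h with ⟨-, h2⟩ | ⟨h1, -⟩
    · exact hxb h2.symm
    · exact hax.ne h1
  have hacCE : s(a,c) ∈ closeEdges G s(a,x) := by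
    rw [closeEdges, mem_filter]
    refine ⟨mem_edgeFinset.2 hac, fun h => ?_, a, a, by simp, by simp, Or.inl rfl⟩
    rw [Sym2.eq_iff] at h
    rcases h with ⟨-, h2⟩ | ⟨h1, -⟩
    · exact hxc h2.symm
    · exact hax.ne h1
  have hpair : ({s(a,b), s(a,c)} : Finset (Sym2 V)) ⊆ closeEdges G s(a,x) := by
    intro e' he'
    rcases mem_insert.1 he' with rfl | he'
    · exact habCE
    · rw [mem_singleton] at he'
      subst he'
      exact hacCE
  have hpaircard : ({s(a,b), s(a,c)} : Finset (Sym2 V)).card = 2 := by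
    rw [card_insert_of_notMem, card_singleton]
    rw [mem_singleton, Sym2.eq_iff]
    rintro (⟨-, h2⟩ | ⟨h1, -⟩)
    · exact hbc.ne h2
    · exact hac.ne h1
  have hsubset : ((closeEdges G s(a,x)).filter (fun e' => ¬(e' ∈ R ∧ ρ s(a,x) < ρ e')))
      ⊆ closeEdges G s(a,x) \ {s(a,b), s(a,c)} := by
    intro e' he'
    rw [mem_filter] at he'
    rw [mem_sdiff]
    refine ⟨he'.1, ?_⟩
    intro hmem
    apply he'.2
    rcases mem_insert.1 hmem with rfl | hmem'
    · exact ⟨hRab, by omega⟩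
    · rw [mem_singleton] at hmem'
      subst hmem'
      exact ⟨hRac, by omega⟩
  have := card_le_card hsubset
  rw [card_sdiff_of_subset hpair, hpaircard] at this
  omega

end Aux

open Finset in
/-- A minimal counterexample (for lists of size 22) among connected simple
graphs with maximum degree at most 4 has no cycle of length 3. -/
theorem minimal_counterexample_no_cycle
    {V : Type*} [Fintype V] (G : SimpleGraph V) [DecidableRel G.Adj]
    (hconn : G.Connected) (hΔ : ∀ u, G.degree u ≤ 4)
    (L : Sym2 V → Finset ℕ) (hL : ∀ e ∈ G.edgeSet, 22 ≤ (L e).card)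
    (hG : ¬ StronglyLColorable G L)
    (hmin : ∀ H : SimpleGraph V, H < G → StronglyLColorable H L) :
    ¬ ∃ (v : V) (p : G.Walk v v), p.IsCycle ∧ p.length = 3 := by
  classical
  rintro ⟨v₀, p, -, hlen⟩
  cases p with
  | nil => simp at hlen
  | @cons _ b _ h₁ q =>
    cases q with
    | nil => simp at hlen
    | @cons _ c _ h₂ q₂ =>
      cases q₂ with
      | nil => simp at hlen
      | @cons _ d _ h₃ q₃ =>
        cases q₃ with
        | cons h₄ q₄ => simp [SimpleGraph.Walk.length_cons] at hlen
        | nil =>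
          clear hlen
          -- h₁ : G.Adj v₀ b, h₂ : G.Adj b c, h₃ : G.Adj c v₀
          have hab : G.Adj v₀ b := h₁
          have hbc : G.Adj b c := h₂
          have hac : G.Adj v₀ c := h₃.symm
          set ρ : Sym2 V → ℕ :=
            fun e => if e = s(v₀,b) then 2 else if c ∈ e then 1 else 0 with hρ
          set R : Finset (Sym2 V) := G.incidenceFinset v₀ ∪ G.incidenceFinset b with hRdef
          have hRab : s(v₀,b) ∈ R :=
            mem_union_left _ ((SimpleGraph.mem_incidenceFinset _ _ _).2 ⟨hab, by simp⟩)
          have hRac : s(v₀,c) ∈ R :=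
            mem_union_left _ ((SimpleGraph.mem_incidenceFinset _ _ _).2 ⟨hac, by simp⟩)
          have hRba : s(b,v₀) ∈ R := by rw [Sym2.eq_swap]; exact hRab
          have hRbc : s(b,c) ∈ R :=
            mem_union_right _ ((SimpleGraph.mem_incidenceFinset _ _ _).2 ⟨hbc, by simp⟩)
          -- ρ computations
          have hρab : ρ s(v₀,b) = 2 := by simp [hρ]
          have hρac : ρ s(v₀,c) = 1 := by
            simp only [hρ]
            rw [if_neg, if_pos (by simp)]
            rw [Sym2.eq_iff]
            rintro (⟨-, h'⟩ | ⟨h', -⟩)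
            · exact hbc.ne h'.symm
            · exact hab.ne h'
          have hρba : ρ s(b,v₀) = 2 := by rw [Sym2.eq_swap]; exact hρab
          have hρbc : ρ s(b,c) = 1 := by
            simp only [hρ]
            rw [if_neg, if_pos (by simp)]
            rw [Sym2.eq_iff]
            rintro (⟨h', -⟩ | ⟨-, h''⟩)
            · exact hab.ne h'.symm
            · exact hac.ne h''.symm
          have hρ0a : ∀ x, G.Adj v₀ x → x ≠ b → x ≠ c → ρ s(v₀,x) = 0 := by
            intro x hx hxb hxc
            simp only [hρ]
            rw [if_neg, if_neg]
            · rw [Sym2.mem_iff]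
              rintro (h' | h')
              · exact hac.ne h'.symm
              · exact hxc h'.symm
            · rw [Sym2.eq_iff]
              rintro (⟨-, h'⟩ | ⟨h', -⟩)
              · exact hxb h'
              · exact hab.ne h'
          have hρ0b : ∀ x, G.Adj b x → x ≠ v₀ → x ≠ c → ρ s(b,x) = 0 := by
            intro x hx hxv hxc
            simp only [hρ]
            rw [if_neg, if_neg]
            · rw [Sym2.mem_iff]
              rintro (h' | h')
              · exact hbc.ne h'.symm
              · exact hxc h'.symm
            · rw [Sym2.eq_iff]
              rintro (⟨h', -⟩ | ⟨-, h'⟩)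
              · exact hab.ne h'.symm
              · exact hxv h'
          -- the smaller graph
          have hlt : G.deleteEdges {s(v₀,b)} < G := by
            refine lt_of_le_of_ne (SimpleGraph.deleteEdges_le _) (fun h => ?_)
            have hadj : (G.deleteEdges {s(v₀,b)}).Adj v₀ b := h.symm ▸ hab
            rw [SimpleGraph.deleteEdges_adj] at hadj
            exact hadj.2 (by simp)
          obtain ⟨φ, hφs, hφL⟩ := hmin _ hlt
          apply hG
          have hRE : ∀ e ∈ R, e ∈ G.edgeSet := by
            intro e he
            rcases mem_union.1 he with h | h
            · exact ((SimpleGraph.mem_incidenceFinset _ _ _).1 h).1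
            · exact ((SimpleGraph.mem_incidenceFinset _ _ _).1 h).1
          refine greedy G L hL ρ R.card R rfl hRE ?_ φ ?_ ?_
          · -- the count condition
            intro e he
            rcases mem_union.1 he with h | h
            · exact cond_helper G hΔ hab hac hbc ρ hρab hρac R hRab hRac h hρ0a
            · exact cond_helper G hΔ hab.symm hbc hac ρ hρba hρbc R hRba hRbc h hρ0b
          · -- list condition
            intro e he heR
            apply hφL
            rw [SimpleGraph.edgeSet_deleteEdges]
            refine ⟨he, fun hm => ?_⟩
            rw [Set.mem_singleton_iff] at hm
            exact heR (hm ▸ hRab)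
          · -- strength off R
            intro e₁ h₁' e₂ h₂' hR₁ hR₂ hne hcl
            have hH₁ : e₁ ∈ (G.deleteEdges {s(v₀,b)}).edgeSet := by
              rw [SimpleGraph.edgeSet_deleteEdges]
              exact ⟨h₁', fun hm => hR₁ ((Set.mem_singleton_iff.1 hm) ▸ hRab)⟩
            have hH₂ : e₂ ∈ (G.deleteEdges {s(v₀,b)}).edgeSet := by
              rw [SimpleGraph.edgeSet_deleteEdges]
              exact ⟨h₂', fun hm => hR₂ ((Set.mem_singleton_iff.1 hm) ▸ hRab)⟩
            refine hφs e₁ hH₁ e₂ hH₂ hne ?_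
            obtain ⟨x, y, hx, hy, hxy⟩ := hcl
            refine ⟨x, y, hx, hy, ?_⟩
            rcases hxy with rfl | hadj
            · exact Or.inl rfl
            · refine Or.inr (SimpleGraph.deleteEdges_adj.2 ⟨hadj, fun hm => ?_⟩)
              rw [Set.mem_singleton_iff, Sym2.eq_iff] at hm
              rcases hm with ⟨rfl, rfl⟩ | ⟨rfl, rfl⟩
              · exact hR₁ (mem_union_left _
                  ((SimpleGraph.mem_incidenceFinset _ _ _).2 ⟨h₁', hx⟩))
              · exact hR₁ (mem_union_right _
                  ((SimpleGraph.mem_incidenceFinset _ _ _).2 ⟨h₁', hx⟩))
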